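/- Let f: ℝⁿ → ℝ be continuously differentiable and let sequences {x^k}, {g^k}, {d^k}, {ε_k}, {r_k}, {ρ_k}, {t_k} follow the IRG scheme with backtracking stepsizes. Assume ρ_k → 0 as k → ∞, that there is an infinite set J ⊂ ℕ with x^k → x̄ along J for some x̄ ∈ ℝⁿ, and that ∇f is Lipschitz continuous on some ball 𝔹(x̄, δ) with δ > 0 (i.e., ∇f is locally Lipschitzian around x̄). Then the stepsize subsequence {t_k}_{k ∈ J} is bounded away from zero: there exists t̄ > 0 with t_k ≥ t̄ for all k ∈ J. -/

import Mathlib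

open Filter InnerProductSpace


lemma seg_norm_le {E : Type*} [NormedAddCommGroup E] [NormedSpace ℝ E]
    (a b : E) {y : E} (hy : y ∈ segment ℝ a b) : ‖y - a‖ ≤ ‖b - a‖ := by
  obtain ⟨u, v, hu, hv, huv, rfl⟩ := hy
  have h : u • a + v • b - a = v • (b - a) := by
    rw [show u = 1 - v by linarith]; module
  rw [h, norm_smul, Real.norm_eq_abs, abs_of_nonneg hv]
  exact mul_le_of_le_one_left (norm_nonneg _) (by linarith)

lemma descent_aux {n : ℕ} (f : EuclideanSpace ℝ (Fin n) → ℝ) (hf : ContDiff ℝ 1 f)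
    (a b : EuclideanSpace ℝ (Fin n)) (C : ℝ)
    (hC : ∀ y ∈ segment ℝ a b, ‖gradient f y - gradient f a‖ ≤ C) :
    f b ≤ f a + (inner ℝ (gradient f a) (b - a) : ℝ) + C * ‖b - a‖ := by
  set L := fderiv ℝ f a with hL
  have hnorm : ∀ y, ‖gradient f y - gradient f a‖ = ‖fderiv ℝ f y - L‖ := by
    intro y
    rw [gradient, gradient, ← LinearIsometryEquiv.map_sub, LinearIsometryEquiv.norm_map]
  have hder : ∀ y ∈ segment ℝ a b, HasFDerivWithinAt (fun z => f z - L z)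
      (fderiv ℝ f y - L) (segment ℝ a b) y := fun y _ =>
    (((hf.differentiable one_ne_zero y).hasFDerivAt).sub L.hasFDerivAt).hasFDerivWithinAt
  have key := (convex_segment a b).norm_image_sub_le_of_norm_hasFDerivWithin_le hder
    (fun y hy => by rw [← hnorm]; exact hC y hy)
    (left_mem_segment ℝ a b) (right_mem_segment ℝ a b)
  have hinner : (inner ℝ (gradient f a) (b - a) : ℝ) = L (b - a) :=
    InnerProductSpace.toDual_symm_apply
  rw [Real.norm_eq_abs] at key
  have habs := (abs_le.1 key).2
  have hmap : L b - L a = L (b - a) := (L.map_sub b a).symm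
  rw [hinner]
  linarith [habs, hmap]


/-- The general IRG scheme (Algorithm 1): inexact gradients `g^k` with automatically
controlled errors `ε_k` (and manual errors `ρ_k`), radius updates with factors
`μ, θ ∈ (0,1)`, reduced directions `d^k`, and iterations `x^{k+1} = x^k + t_k d^k`. -/
def IRGScheme {n : ℕ} (f : EuclideanSpace ℝ (Fin n) → ℝ)
    (x g d : ℕ → EuclideanSpace ℝ (Fin n)) (ε r ρ t : ℕ → ℝ) (μ θ : ℝ) : Prop :=
  (0 < μ ∧ μ < 1) ∧ (0 < θ ∧ θ < 1) ∧
  (∀ k, 0 < ε k) ∧ (∀ k, 0 < r k) ∧ (∀ k, 0 < ρ k) ∧ (∀ k, 0 < t k) ∧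
  (∀ k, ‖g k - gradient f (x k)‖ ≤ min (ε k) (ρ k)) ∧
  (∀ k, ‖g k‖ ≤ r k + ε k →
    r (k + 1) = μ * r k ∧ ε (k + 1) = θ * ε k ∧ d k = 0) ∧
  (∀ k, r k + ε k < ‖g k‖ →
    r (k + 1) = r k ∧ ε (k + 1) = ε k ∧
      d k = -(((‖g k‖ - ε k) / ‖g k‖) • g k)) ∧
  (∀ k, x (k + 1) = x k + t k • d k)

/-- Backtracking stepsize selection: `t_k = τ` on null iterations, and otherwise
`t_k = γ^{m_k}` with `m_k` the smallest nonnegative integer satisfying the linesearch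
condition `f(x^k + γ^m d^k) ≤ f(x^k) - β γ^m ‖d^k‖²`. -/
def BacktrackingStepsize {n : ℕ} (f : EuclideanSpace ℝ (Fin n) → ℝ)
    (x d : ℕ → EuclideanSpace ℝ (Fin n)) (t : ℕ → ℝ) (β γ τ : ℝ) : Prop :=
  (0 < β ∧ β < 1) ∧ (0 < γ ∧ γ < 1) ∧ (0 < τ ∧ τ < 1) ∧
  (∀ k, d k = 0 → t k = τ) ∧
  (∀ k, d k ≠ 0 → ∃ m : ℕ,
    t k = γ ^ m ∧
    f (x k + γ ^ m • d k) ≤ f (x k) - β * γ ^ m * ‖d k‖ ^ 2 ∧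
    ∀ j < m, ¬ f (x k + γ ^ j • d k) ≤ f (x k) - β * γ ^ j * ‖d k‖ ^ 2)

/-- Proposition 5.7: for the IRG method with backtracking stepsizes, if `ρ_k → 0`,
`x^k → xbar` along a subsequence `φ`, and `∇f` is Lipschitz continuous on a ball
`𝔹(xbar, δ)` with `δ > 0`, then the stepsizes along that subsequence are bounded
away from zero. -/
theorem stmt17 {n : ℕ} (f : EuclideanSpace ℝ (Fin n) → ℝ) (hf : ContDiff ℝ 1 f)
    (x g d : ℕ → EuclideanSpace ℝ (Fin n)) (ε r ρ t : ℕ → ℝ) (μ θ β γ τ : ℝ)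
    (hirg : IRGScheme f x g d ε r ρ t μ θ)
    (hbt : BacktrackingStepsize f x d t β γ τ)
    (hρ : Tendsto ρ atTop (nhds 0))
    (xbar : EuclideanSpace ℝ (Fin n))
    (φ : ℕ → ℕ) (hφ : StrictMono φ)
    (hconv : Tendsto (x ∘ φ) atTop (nhds xbar))
    (δ : ℝ) (hδ : 0 < δ) (K : NNReal)
    (hlip : LipschitzOnWith K (gradient f) (Metric.closedBall xbar δ)) :
    ∃ tbar > (0 : ℝ), ∀ k, tbar ≤ t (φ k) := by
  obtain ⟨hμ, hθ, hεpos, hrpos, hρpos, htpos, hgerr, hnull, hdescit, hxupd⟩ := hirg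
  obtain ⟨hβ, hγ, hτ, htnull, htls⟩ := hbt
  -- key facts about descent directions
  have hkey : ∀ k, d k ≠ 0 →
      ‖d k‖ = ‖g k‖ - ε k ∧ (inner ℝ (gradient f (x k)) (d k) : ℝ) ≤ -‖d k‖^2 := by
    intro k hk
    have hbig : r k + ε k < ‖g k‖ := by
      by_contra h
      exact hk (hnull k (not_lt.1 h)).2.2
    have hgpos : 0 < ‖g k‖ := lt_trans (by linarith [hεpos k, hrpos k] : (0:ℝ) < r k + ε k) hbig
    have hgne : ‖g k‖ ≠ 0 := ne_of_gt hgpos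
    have hd := (hdescit k hbig).2.2
    set c : ℝ := (‖g k‖ - ε k) / ‖g k‖ with hc
    have hcnn : 0 ≤ c := div_nonneg (by linarith [hεpos k, hrpos k]) hgpos.le
    have hnd : ‖d k‖ = ‖g k‖ - ε k := by
      rw [hd, norm_neg, norm_smul, Real.norm_eq_abs, abs_of_nonneg hcnn, hc,
        div_mul_cancel₀ _ hgne]
    have herr : ‖g k - gradient f (x k)‖ ≤ ε k := le_trans (hgerr k) (min_le_left _ _)
    have h1 : (inner ℝ (g k) (d k) : ℝ) = -(c * ‖g k‖^2) := by
      rw [hd, inner_neg_right, real_inner_smul_right, real_inner_self_eq_norm_sq]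
    have h2 : -(ε k * ‖d k‖) ≤ (inner ℝ (g k - gradient f (x k)) (d k) : ℝ) := by
      have ha := abs_real_inner_le_norm (g k - gradient f (x k)) (d k)
      have hb := (abs_le.1 ha).1
      nlinarith [norm_nonneg (d k), herr]
    have h3 : (inner ℝ (gradient f (x k)) (d k) : ℝ)
        = (inner ℝ (g k) (d k) : ℝ) - (inner ℝ (g k - gradient f (x k)) (d k) : ℝ) := by
      rw [inner_sub_left]; ring
    have hcg : c * ‖g k‖^2 = (‖g k‖ - ε k) * ‖g k‖ := by
      rw [hc]; field_simp
    refine ⟨hnd, ?_⟩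
    rw [h3, h1]
    nlinarith [h2, hnd, hεpos k]
  -- eventual localization
  have hφtop : Tendsto φ atTop atTop := hφ.tendsto_atTop
  have hρφ : Tendsto (ρ ∘ φ) atTop (nhds 0) := hρ.comp hφtop
  have h1 : ∀ᶠ k in atTop, (x ∘ φ) k ∈ Metric.closedBall xbar (δ/2) :=
    hconv.eventually_mem (Metric.closedBall_mem_nhds xbar (by positivity))
  have h2 : ∀ᶠ k in atTop, (ρ ∘ φ) k < 1 := hρφ.eventually_lt_const one_pos
  obtain ⟨k₀, hk₀⟩ := eventually_atTop.1 (h1.and h2)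
  set M : ℝ := ‖gradient f xbar‖ + (K:ℝ) * δ + 1 with hM
  have hMpos : 0 < M := by positivity
  have hxin : ∀ k ≥ k₀, dist (x (φ k)) xbar ≤ δ/2 := by
    intro k hk
    have := (hk₀ k hk).1
    simpa [Metric.mem_closedBall] using this
  have hxball : ∀ k ≥ k₀, x (φ k) ∈ Metric.closedBall xbar δ := by
    intro k hk
    rw [Metric.mem_closedBall]
    linarith [hxin k hk]
  have hxbarball : xbar ∈ Metric.closedBall xbar δ := Metric.mem_closedBall_self hδ.le
  have hdbound : ∀ k ≥ k₀, ‖d (φ k)‖ ≤ M := by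
    intro k hk
    by_cases hd0 : d (φ k) = 0
    · rw [hd0, norm_zero]; positivity
    · obtain ⟨hnd, _⟩ := hkey _ hd0
      have hl := hlip.dist_le_mul _ (hxball k hk) _ hxbarball
      have hdist : dist (x (φ k)) xbar ≤ δ := by linarith [hxin k hk]
      have hKd : dist (gradient f (x (φ k))) (gradient f xbar) ≤ (K:ℝ) * δ :=
        le_trans hl (mul_le_mul_of_nonneg_left hdist K.coe_nonneg)
      have hgr : ‖gradient f (x (φ k))‖ ≤ ‖gradient f xbar‖ + (K:ℝ)*δ := by
        have hns := norm_sub_norm_le (gradient f (x (φ k))) (gradient f xbar)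
        rw [← dist_eq_norm] at hns
        linarith
      have herrρ : ‖g (φ k) - gradient f (x (φ k))‖ ≤ ρ (φ k) :=
        le_trans (hgerr _) (min_le_right _ _)
      have hng : ‖g (φ k)‖ ≤ ‖gradient f (x (φ k))‖ + ρ (φ k) := by
        have hns := norm_sub_norm_le (g (φ k)) (gradient f (x (φ k)))
        linarith
      have hρ1 : ρ (φ k) < 1 := (hk₀ k hk).2
      rw [hnd, hM]
      linarith [hεpos (φ k)]
  set sbar : ℝ := min (min ((1-β)/((K:ℝ)+1)) (δ/(2*M))) 1 with hsb
  have hsbpos : 0 < sbar :=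
    lt_min (lt_min (div_pos (by linarith [hβ.2]) (by positivity))
      (div_pos hδ (by linarith))) one_pos
  have hsb1 : sbar ≤ 1 := min_le_right _ _
  -- the linesearch condition holds for all small stepsizes
  have hclaim : ∀ k ≥ k₀, d (φ k) ≠ 0 → ∀ s : ℝ, 0 < s → s ≤ sbar →
      f (x (φ k) + s • d (φ k)) ≤ f (x (φ k)) - β * s * ‖d (φ k)‖^2 := by
    intro k hk hd0 s hs hssb
    obtain ⟨hnd, hin⟩ := hkey _ hd0
    set a := x (φ k) with ha
    set dd := d (φ k) with hdd
    set b := a + s • dd with hb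
    have hba : b - a = s • dd := by rw [hb]; abel
    have hnba : ‖b - a‖ = s * ‖dd‖ := by
      rw [hba, norm_smul, Real.norm_eq_abs, abs_of_pos hs]
    have hdM : ‖dd‖ ≤ M := hdbound k hk
    have hsd : s * ‖dd‖ ≤ δ/2 := by
      have hs1 : s ≤ δ/(2*M) := le_trans hssb (le_trans (min_le_left _ _) (min_le_right _ _))
      calc s * ‖dd‖ ≤ (δ/(2*M)) * M :=
            mul_le_mul hs1 hdM (norm_nonneg _) (by positivity)
        _ = δ/2 := by field_simp
    have hax : dist a xbar ≤ δ/2 := hxin k hk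
    have hsegball : ∀ y ∈ segment ℝ a b, y ∈ Metric.closedBall xbar δ := by
      intro y hy
      have hya := seg_norm_le a b hy
      rw [hnba] at hya
      rw [Metric.mem_closedBall, dist_eq_norm]
      have htri : ‖y - xbar‖ ≤ ‖y - a‖ + ‖a - xbar‖ := by
        have := norm_add_le (y - a) (a - xbar)
        simpa [sub_add_sub_cancel] using this
      rw [dist_eq_norm] at hax
      linarith
    have hlipseg : ∀ y ∈ segment ℝ a b, ‖gradient f y - gradient f a‖ ≤ (K:ℝ) * (s * ‖dd‖) := by
      intro y hy
      have hy' := hsegball y hy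
      have hl := hlip.dist_le_mul y hy' a (hxball k hk)
      rw [dist_eq_norm, dist_eq_norm] at hl
      have hya : ‖y - a‖ ≤ s * ‖dd‖ := hnba ▸ seg_norm_le a b hy
      exact le_trans hl (mul_le_mul_of_nonneg_left hya K.coe_nonneg)
    have hdes := descent_aux f hf a b ((K:ℝ) * (s*‖dd‖)) hlipseg
    have hinn : (inner ℝ (gradient f a) (b - a) : ℝ) = s * (inner ℝ (gradient f a) dd : ℝ) := by
      rw [hba, real_inner_smul_right]
    have hKs : (K:ℝ) * s ≤ 1 - β := by
      have hs1 : s ≤ (1-β)/((K:ℝ)+1) :=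
        le_trans hssb (le_trans (min_le_left _ _) (min_le_left _ _))
      have hs2 : s * ((K:ℝ)+1) ≤ 1-β := (le_div_iff₀ (by positivity)).1 hs1
      linarith [hs2, hs.le]
    have hsmul : s * (inner ℝ (gradient f a) dd : ℝ) ≤ s * (-(‖dd‖^2)) :=
      mul_le_mul_of_nonneg_left hin hs.le
    rw [hinn, hnba] at hdes
    have hprod : 0 ≤ (s * ‖dd‖^2) * (1 - β - (K:ℝ)*s) :=
      mul_nonneg (mul_nonneg hs.le (sq_nonneg _)) (by linarith)
    linarith [hdes, hsmul, hprod]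
  -- uniform stepsize bound for large k
  have hstep : ∀ k ≥ k₀, min τ (γ * sbar) ≤ t (φ k) := by
    intro k hk
    by_cases hd0 : d (φ k) = 0
    · rw [htnull _ hd0]; exact min_le_left _ _
    · obtain ⟨m, htm, hls, hmin⟩ := htls _ hd0
      refine le_trans (min_le_right _ _) ?_
      cases m with
      | zero =>
        rw [htm, pow_zero]
        nlinarith [hγ.1, hγ.2, hsbpos, hsb1]
      | succ m' =>
        have hfail := hmin m' (Nat.lt_succ_self m')
        have hγm : (0:ℝ) < γ ^ m' := pow_pos hγ.1 _
        have hgt : sbar < γ ^ m' := by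
          by_contra hle
          push_neg at hle
          exact hfail (hclaim k hk hd0 (γ^m') hγm hle)
        rw [htm, pow_succ]
        calc γ * sbar ≤ γ * γ^m' := mul_le_mul_of_nonneg_left hgt.le hγ.1.le
          _ = γ^m' * γ := mul_comm _ _
  refine ⟨min (min τ (γ*sbar)) ((Finset.range (k₀+1)).inf' (by simp) fun j => t (φ j)), ?_, ?_⟩
  · apply lt_min
    · exact lt_min hτ.1 (mul_pos hγ.1 hsbpos)
    · rw [Finset.lt_inf'_iff]
      exact fun j _ => htpos (φ j)
  · intro k
    rcases le_or_gt k k₀ with h | h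
    · exact le_trans (min_le_right _ _)
        (Finset.inf'_le _ (Finset.mem_range.2 (Nat.lt_succ_of_le h)))
    · exact le_trans (min_le_left _ _) (hstep k h.le)
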